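/- Let d ≥ 1, L > 0, t > 0, and let f : ℝ^d → ℝ be L-smooth, i.e. f is differentiable and ‖∇f(x) − ∇f(y)‖ ≤ L‖x − y‖ for all x, y ∈ ℝ^d. Then for every point x ∈ ℝ^d and every unit vector e ∈ ℝ^d (‖e‖ = 1) the finite-difference gradient estimate satisfies ‖ d·((f(x + t·e) − f(x − t·e))/(2t))·e − d·⟨∇f(x), e⟩·e ‖² ≤ d²·L²·t²/4. -/

import Mathlib

open RealInnerProductSpace

lemma taylor_half_bound {d : ℕ} (L t : ℝ) (hL : 0 < L) (ht : 0 ≤ t)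
    (f : EuclideanSpace ℝ (Fin d) → ℝ)
    (hdiff : Differentiable ℝ f)
    (hsmooth : ∀ x y : EuclideanSpace ℝ (Fin d),
      ‖gradient f x - gradient f y‖ ≤ L * ‖x - y‖)
    (x e : EuclideanSpace ℝ (Fin d)) (he : ‖e‖ = 1) :
    |f (x + t • e) - f x - t * ⟪gradient f x, e⟫| ≤ L * t ^ 2 / 2 := by
  set c : ℝ := ⟪gradient f x, e⟫ with hc
  have hgrad_cont : Continuous (gradient f) := by
    apply LipschitzWith.continuous (K := Real.toNNReal L)
    apply LipschitzWith.of_dist_le_mul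
    intro a b
    rw [dist_eq_norm, dist_eq_norm]
    simpa [Real.coe_toNNReal _ hL.le] using hsmooth a b
  have hderiv : ∀ s : ℝ, HasDerivAt (fun s : ℝ => f (x + s • e) - s * c)
      (⟪gradient f (x + s • e), e⟫ - c) s := by
    intro s
    have h1 : HasDerivAt (fun s : ℝ => x + s • e) e s := by
      simpa using ((hasDerivAt_id s).smul_const e).const_add x
    have h2 : HasFDerivAt f ((InnerProductSpace.toDual ℝ _) (gradient f (x + s • e)))
        (x + s • e) := (hdiff _).hasGradientAt
    have h3 : HasDerivAt (fun s : ℝ => f (x + s • e))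
        (((InnerProductSpace.toDual ℝ _) (gradient f (x + s • e))) e) s :=
      h2.comp_hasDerivAt s h1
    rw [InnerProductSpace.toDual_apply_apply] at h3
    exact h3.sub (hasDerivAt_mul_const c)
  have hcont : Continuous (fun s : ℝ => ⟪gradient f (x + s • e), e⟫ - c) := by
    exact ((hgrad_cont.comp (by continuity)).inner continuous_const).sub continuous_const
  have hint : IntervalIntegrable (fun s : ℝ => ⟪gradient f (x + s • e), e⟫ - c)
      MeasureTheory.volume 0 t := hcont.intervalIntegrable 0 t
  have hftc : ∫ s in (0:ℝ)..t, (⟪gradient f (x + s • e), e⟫ - c) =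
      (f (x + t • e) - t * c) - (f (x + (0:ℝ) • e) - 0 * c) :=
    intervalIntegral.integral_eq_sub_of_hasDerivAt (fun s _ => hderiv s) hint
  have hbound : ∀ s ∈ Set.Ioc (0:ℝ) t, ‖⟪gradient f (x + s • e), e⟫ - c‖ ≤ L * s := by
    intro s hs
    have h1 : ⟪gradient f (x + s • e), e⟫ - c = ⟪gradient f (x + s • e) - gradient f x, e⟫ := by
      rw [inner_sub_left]
    rw [h1, Real.norm_eq_abs]
    calc |⟪gradient f (x + s • e) - gradient f x, e⟫|
        ≤ ‖gradient f (x + s • e) - gradient f x‖ * ‖e‖ := abs_real_inner_le_norm _ _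
      _ ≤ L * ‖(x + s • e) - x‖ := by rw [he, mul_one]; exact hsmooth _ _
      _ = L * s := by
          rw [add_sub_cancel_left, norm_smul, he, mul_one, Real.norm_eq_abs,
            abs_of_pos hs.1]
  have hnorm : ‖∫ s in (0:ℝ)..t, (⟪gradient f (x + s • e), e⟫ - c)‖ ≤ L * t ^ 2 / 2 := by
    have hg : IntervalIntegrable (fun s : ℝ => L * s) MeasureTheory.volume 0 t :=
      (continuous_const.mul continuous_id).intervalIntegrable 0 t
    have := intervalIntegral.norm_integral_le_abs_of_norm_le (g := fun s => L * s)
      (by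
        rw [MeasureTheory.ae_restrict_iff' measurableSet_uIoc]
        refine MeasureTheory.ae_of_all _ (fun s hs => ?_)
        rw [Set.uIoc_of_le ht] at hs
        exact hbound s hs) hg
    refine this.trans ?_
    rw [intervalIntegral.integral_const_mul, integral_id]
    rw [abs_of_nonneg (by nlinarith)]
    nlinarith
  rw [hftc] at hnorm
  have heq : f (x + t • e) - f x - t * c =
      (f (x + t • e) - t * c) - (f (x + (0:ℝ) • e) - 0 * c) := by
    rw [zero_smul, add_zero]; ring
  rw [heq, ← Real.norm_eq_abs]
  exact hnorm

theorem finite_diff_variance_fixed_direction {d : ℕ} (hd : 1 ≤ d) (L t : ℝ)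
    (hL : 0 < L) (ht : 0 < t)
    (f : EuclideanSpace ℝ (Fin d) → ℝ)
    (hdiff : Differentiable ℝ f)
    (hsmooth : ∀ x y : EuclideanSpace ℝ (Fin d),
      ‖gradient f x - gradient f y‖ ≤ L * ‖x - y‖)
    (x e : EuclideanSpace ℝ (Fin d)) (he : ‖e‖ = 1) :
    ‖((d : ℝ) * ((f (x + t • e) - f (x - t • e)) / (2 * t))) • e -
        ((d : ℝ) * ⟪gradient f x, e⟫) • e‖ ^ 2 ≤ (d : ℝ) ^ 2 * L ^ 2 * t ^ 2 / 4 := by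
  set c : ℝ := ⟪gradient f x, e⟫ with hc
  have hA := taylor_half_bound L t hL ht.le f hdiff hsmooth x e he
  have hB := taylor_half_bound L t hL ht.le f hdiff hsmooth x (-e) (by rwa [norm_neg])
  have hne : x + t • (-e) = x - t • e := by module
  have hcn : ⟪gradient f x, -e⟫ = -c := by rw [inner_neg_right]
  rw [hne, hcn] at hB
  -- |Δ - 2 t c| ≤ L t²
  have hkey : |f (x + t • e) - f (x - t • e) - 2 * t * c| ≤ L * t ^ 2 := by
    have := abs_sub (f (x + t • e) - f x - t * c) (f (x - t • e) - f x - t * (-c))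
    calc |f (x + t • e) - f (x - t • e) - 2 * t * c|
        = |(f (x + t • e) - f x - t * c) - (f (x - t • e) - f x - t * (-c))| := by ring_nf
      _ ≤ |f (x + t • e) - f x - t * c| + |f (x - t • e) - f x - t * (-c)| := abs_sub _ _
      _ ≤ L * t ^ 2 / 2 + L * t ^ 2 / 2 := add_le_add hA hB
      _ = L * t ^ 2 := by ring
  have hdiv : |(f (x + t • e) - f (x - t • e)) / (2 * t) - c| ≤ L * t / 2 := by
    have h2t : (0:ℝ) < 2 * t := by positivity
    have heq2 : (f (x + t • e) - f (x - t • e)) / (2 * t) - c =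
        (f (x + t • e) - f (x - t • e) - 2 * t * c) / (2 * t) := by
      field_simp
    rw [heq2, abs_div, abs_of_pos h2t, div_le_iff₀ h2t]
    calc |f (x + t • e) - f (x - t • e) - 2 * t * c|
        ≤ L * t ^ 2 := hkey
      _ = L * t / 2 * (2 * t) := by ring
  have hre : ((d : ℝ) * ((f (x + t • e) - f (x - t • e)) / (2 * t))) • e -
      ((d : ℝ) * c) • e =
      ((d : ℝ) * ((f (x + t • e) - f (x - t • e)) / (2 * t) - c)) • e := by
    rw [← sub_smul]; ring_nf
  rw [hre, norm_smul, he, mul_one, Real.norm_eq_abs, abs_mul, Nat.abs_cast]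
  have h1 : (d : ℝ) * |(f (x + t • e) - f (x - t • e)) / (2 * t) - c| ≤ (d:ℝ) * (L * t / 2) :=
    mul_le_mul_of_nonneg_left hdiv (Nat.cast_nonneg d)
  calc ((d:ℝ) * |(f (x + t • e) - f (x - t • e)) / (2 * t) - c|) ^ 2
      ≤ ((d:ℝ) * (L * t / 2)) ^ 2 := by
        apply pow_le_pow_left₀ (by positivity) h1
    _ = (d : ℝ) ^ 2 * L ^ 2 * t ^ 2 / 4 := by ring
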